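/- Fix an integer b ≥ 2, and define Ξ_k = (b−1)·b^k·∑_{h>k} b^{h−1}·ζ_h with ζ_h = ∑_{j≥h} (b−1)²/((b^j−1)(b^{j+1}−1)). Then Ξ_k < b³/(b³ + b² − b − 1) < 1 for all k ≥ 0. -/

import Mathlib

/-- `ζ_h = ∑_{j ≥ h} (b−1)² / ((b^j − 1)(b^{j+1} − 1))`, written as a sum over `j = h + i`. -/
noncomputable def zeta (b h : ℕ) : ℝ :=
  ∑' i : ℕ, ((b : ℝ) - 1) ^ 2 / (((b : ℝ) ^ (h + i) - 1) * ((b : ℝ) ^ (h + i + 1) - 1))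

/-- `Ξ_k = (b−1)·b^k·∑_{h > k} b^{h−1}·ζ_h`, written as a sum over `h = k + 1 + i`. -/
noncomputable def Xi (b k : ℕ) : ℝ :=
  ((b : ℝ) - 1) * (b : ℝ) ^ k * ∑' i : ℕ, (b : ℝ) ^ (k + i) * zeta b (k + 1 + i)

private lemma hB1 {b : ℕ} (hb : 2 ≤ b) : (1:ℝ) < (b:ℝ) := by
  have : (2:ℝ) ≤ (b:ℝ) := by exact_mod_cast hb
  linarith

private lemma pow_one_le {b : ℕ} (hb : 2 ≤ b) (m : ℕ) : (1:ℝ) ≤ (b:ℝ)^m :=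
  one_le_pow₀ (le_of_lt (hB1 hb))

private lemma pow_one_lt {b : ℕ} (hb : 2 ≤ b) {m : ℕ} (hm : 1 ≤ m) : (1:ℝ) < (b:ℝ)^m := by
  calc (1:ℝ) < (b:ℝ) := hB1 hb
  _ = (b:ℝ)^1 := (pow_one _).symm
  _ ≤ (b:ℝ)^m := pow_le_pow_right₀ (le_of_lt (hB1 hb)) hm

private lemma denom_pos {b : ℕ} (hb : 2 ≤ b) (m : ℕ) : (0:ℝ) < ((b:ℝ)^(m+1) - 1) := by
  have := pow_one_lt hb (m := m+1) (by omega); linarith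

private lemma fac1 {b : ℕ} (hb : 2 ≤ b) (m : ℕ) : ((b:ℝ)-1) * (b:ℝ)^m ≤ (b:ℝ)^(m+1) - 1 := by
  have h1 := pow_one_le hb m
  have h2 : (b:ℝ)^(m+1) = (b:ℝ)^m * (b:ℝ) := pow_succ _ _
  nlinarith

private lemma fac2 {b : ℕ} (hb : 2 ≤ b) (m : ℕ) :
    ((b:ℝ)-1) * ((b:ℝ)+1) * (b:ℝ)^m ≤ (b:ℝ)^(m+2) - 1 := by
  have h1 := pow_one_le hb m
  have h2 : (b:ℝ)^(m+2) = (b:ℝ)^m * ((b:ℝ)*(b:ℝ)) := by ring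
  nlinarith

private lemma fac2' {b : ℕ} (hb : 2 ≤ b) {m : ℕ} (hm : 1 ≤ m) :
    ((b:ℝ)-1) * ((b:ℝ)+1) * (b:ℝ)^m < (b:ℝ)^(m+2) - 1 := by
  have h1 := pow_one_lt hb hm
  have h2 : (b:ℝ)^(m+2) = (b:ℝ)^m * ((b:ℝ)*(b:ℝ)) := by ring
  nlinarith

private lemma term_le {b : ℕ} (hb : 2 ≤ b) (m : ℕ) :
    ((b:ℝ)-1)^2 / (((b:ℝ)^(m+1) - 1) * ((b:ℝ)^(m+2) - 1)) ≤ 1 / (((b:ℝ)+1) * (b:ℝ)^(2*m)) := by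
  have hB := hB1 hb
  have hp1 := denom_pos hb m
  have hp2 : (0:ℝ) < (b:ℝ)^(m+2) - 1 := by simpa [add_assoc] using denom_pos hb (m+1)
  have hpm := pow_one_le hb m
  have hE : (0:ℝ) < ((b:ℝ)+1) * (b:ℝ)^(2*m) := by positivity
  rw [div_le_div_iff₀ (by positivity) hE, one_mul]
  have key : (((b:ℝ)-1) * (b:ℝ)^m) * (((b:ℝ)-1) * ((b:ℝ)+1) * (b:ℝ)^m)
      ≤ ((b:ℝ)^(m+1) - 1) * ((b:ℝ)^(m+2) - 1) :=
    mul_le_mul (fac1 hb m) (fac2 hb m)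
      (le_of_lt (mul_pos (mul_pos (by linarith) (by linarith : (0:ℝ) < (b:ℝ)+1))
        (by linarith : (0:ℝ) < (b:ℝ)^m))) (le_of_lt hp1)
  calc ((b:ℝ)-1)^2 * (((b:ℝ)+1) * (b:ℝ)^(2*m))
      = (((b:ℝ)-1) * (b:ℝ)^m) * (((b:ℝ)-1) * ((b:ℝ)+1) * (b:ℝ)^m) := by
        rw [two_mul, pow_add]; ring
    _ ≤ _ := key

private lemma term_lt {b : ℕ} (hb : 2 ≤ b) {m : ℕ} (hm : 1 ≤ m) :
    ((b:ℝ)-1)^2 / (((b:ℝ)^(m+1) - 1) * ((b:ℝ)^(m+2) - 1)) < 1 / (((b:ℝ)+1) * (b:ℝ)^(2*m)) := by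
  have hB := hB1 hb
  have hp1 := denom_pos hb m
  have hp2 : (0:ℝ) < (b:ℝ)^(m+2) - 1 := by simpa [add_assoc] using denom_pos hb (m+1)
  have hpm := pow_one_le hb m
  have hE : (0:ℝ) < ((b:ℝ)+1) * (b:ℝ)^(2*m) := by positivity
  rw [div_lt_div_iff₀ (by positivity) hE, one_mul]
  have h1 := fac1 hb m
  have h2 := fac2' hb hm
  have key : (((b:ℝ)-1) * (b:ℝ)^m) * (((b:ℝ)-1) * ((b:ℝ)+1) * (b:ℝ)^m)
      < ((b:ℝ)^(m+1) - 1) * ((b:ℝ)^(m+2) - 1) :=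
    mul_lt_mul' h1 h2
      (le_of_lt (mul_pos (mul_pos (by linarith) (by linarith : (0:ℝ) < (b:ℝ)+1))
        (by linarith : (0:ℝ) < (b:ℝ)^m))) hp1
  calc ((b:ℝ)-1)^2 * (((b:ℝ)+1) * (b:ℝ)^(2*m))
      = (((b:ℝ)-1) * (b:ℝ)^m) * (((b:ℝ)-1) * ((b:ℝ)+1) * (b:ℝ)^m) := by
        rw [two_mul, pow_add]; ring
    _ < _ := key

private lemma zeta_nonneg {b : ℕ} (hb : 2 ≤ b) (h : ℕ) : 0 ≤ zeta b h := by
  apply tsum_nonneg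
  intro i
  apply div_nonneg (sq_nonneg _)
  have h1 : (0:ℝ) ≤ (b:ℝ)^(h+i) - 1 := by
    have := pow_one_le hb (h+i); linarith
  have h2 : (0:ℝ) ≤ (b:ℝ)^(h+i+1) - 1 := by
    have := pow_one_le hb (h+i+1); linarith
  exact mul_nonneg h1 h2

private lemma gZ_eq {b : ℕ} (hb : 2 ≤ b) (m i : ℕ) :
    1/(((b:ℝ)+1) * (b:ℝ)^(2*(m+i)))
      = (1/(((b:ℝ)+1) * (b:ℝ)^(2*m))) * ((1/(b:ℝ)^2))^i := by
  have hB := hB1 hb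
  have hb0 : (b:ℝ) ≠ 0 := by linarith
  have hb1 : (b:ℝ)+1 ≠ 0 := by linarith
  rw [div_pow, one_pow, show 2*(m+i) = 2*m + 2*i by ring, pow_add, pow_mul, pow_mul]
  field_simp

private lemma gZ_summable {b : ℕ} (hb : 2 ≤ b) (m : ℕ) :
    Summable (fun i : ℕ => 1/(((b:ℝ)+1) * (b:ℝ)^(2*(m+i)))) := by
  have hB := hB1 hb
  have hr0 : (0:ℝ) ≤ 1/(b:ℝ)^2 := by positivity
  have hr1 : 1/(b:ℝ)^2 < 1 := by
    rw [div_lt_one (by positivity)]; nlinarith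
  have := (summable_geometric_of_lt_one hr0 hr1).mul_left (1/(((b:ℝ)+1) * (b:ℝ)^(2*m)))
  apply this.congr
  intro i
  exact (gZ_eq hb m i).symm

private lemma gZ_tsum {b : ℕ} (hb : 2 ≤ b) (m : ℕ) :
    ∑' i : ℕ, 1/(((b:ℝ)+1) * (b:ℝ)^(2*(m+i)))
      = (b:ℝ)^2 / (((b:ℝ)+1) * ((b:ℝ)^2 - 1) * (b:ℝ)^(2*m)) := by
  have hB := hB1 hb
  have hb0 : (b:ℝ) ≠ 0 := by linarith
  have hb1 : (b:ℝ)+1 ≠ 0 := by linarith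
  have hb2 : (b:ℝ)^2 - 1 ≠ 0 := by nlinarith
  have hr0 : (0:ℝ) ≤ 1/(b:ℝ)^2 := by positivity
  have hr1 : 1/(b:ℝ)^2 < 1 := by rw [div_lt_one (by positivity)]; nlinarith
  calc ∑' i : ℕ, 1/(((b:ℝ)+1) * (b:ℝ)^(2*(m+i)))
      = ∑' i : ℕ, (1/(((b:ℝ)+1) * (b:ℝ)^(2*m))) * ((1/(b:ℝ)^2))^i :=
        tsum_congr (gZ_eq hb m)
    _ = (1/(((b:ℝ)+1) * (b:ℝ)^(2*m))) * (1 - 1/(b:ℝ)^2)⁻¹ := by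
        rw [tsum_mul_left, tsum_geometric_of_lt_one hr0 hr1]
    _ = (b:ℝ)^2 / (((b:ℝ)+1) * ((b:ℝ)^2 - 1) * (b:ℝ)^(2*m)) := by
        have : 1 - 1/(b:ℝ)^2 ≠ 0 := by
          rw [sub_ne_zero]; intro hh; rw [← hh] at hr1; exact lt_irrefl _ hr1
        field_simp

private lemma zeta_lt {b : ℕ} (hb : 2 ≤ b) (m : ℕ) :
    zeta b (m+1) < (b:ℝ)^2 / (((b:ℝ)+1) * ((b:ℝ)^2 - 1) * (b:ℝ)^(2*m)) := by
  rw [← gZ_tsum hb m]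
  unfold zeta
  apply Summable.tsum_lt_tsum_of_nonneg (i := 1)
  · intro i
    apply div_nonneg (sq_nonneg _)
    have h1 := denom_pos hb (m+i)
    have h2 := denom_pos hb (m+i+1)
    rw [show (m+i)+1 = m+1+i by omega] at h1
    rw [show (m+i+1)+1 = m+1+i+1 by omega] at h2
    positivity
  · intro i
    have h := term_le hb (m+i)
    rw [show (m+i)+1 = m+1+i by omega, show (m+i)+2 = m+1+i+1 by omega] at h
    exact h
  · have h := term_lt hb (m := m+1) (by omega)
    rw [show (m+1)+1 = m+1+1 by omega, show (m+1)+2 = m+1+1+1 by omega] at h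
    exact h
  · exact gZ_summable hb m

private lemma G_eq {b : ℕ} (hb : 2 ≤ b) (k i : ℕ) :
    (b:ℝ)^(k+i) * ((b:ℝ)^2 / (((b:ℝ)+1)*((b:ℝ)^2-1)*(b:ℝ)^(2*(k+i))))
      = ((b:ℝ)^2 / (((b:ℝ)+1)*((b:ℝ)^2-1)*(b:ℝ)^k)) * ((1/(b:ℝ))^i) := by
  have hB := hB1 hb
  have hb0 : (b:ℝ) ≠ 0 := by linarith
  have hb1 : (b:ℝ)+1 ≠ 0 := by linarith
  have hb2 : (b:ℝ)^2 - 1 ≠ 0 := by nlinarith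
  have h2n : (b:ℝ)^(2*(k+i)) = (b:ℝ)^(k+i)*(b:ℝ)^(k+i) := by rw [two_mul, pow_add]
  have hki : (b:ℝ)^(k+i) = (b:ℝ)^k*(b:ℝ)^i := pow_add _ _ _
  rw [div_pow, one_pow, h2n, hki]
  field_simp

private lemma G_summable {b : ℕ} (hb : 2 ≤ b) (k : ℕ) :
    Summable (fun i : ℕ =>
      (b:ℝ)^(k+i) * ((b:ℝ)^2 / (((b:ℝ)+1)*((b:ℝ)^2-1)*(b:ℝ)^(2*(k+i))))) := by
  have hB := hB1 hb
  have hr0 : (0:ℝ) ≤ 1/(b:ℝ) := by positivity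
  have hr1 : 1/(b:ℝ) < 1 := by rw [div_lt_one (by linarith)]; linarith
  exact ((summable_geometric_of_lt_one hr0 hr1).mul_left
    ((b:ℝ)^2 / (((b:ℝ)+1)*((b:ℝ)^2-1)*(b:ℝ)^k))).congr (fun i => (G_eq hb k i).symm)

private lemma G_tsum {b : ℕ} (hb : 2 ≤ b) (k : ℕ) :
    ∑' i : ℕ, (b:ℝ)^(k+i) * ((b:ℝ)^2 / (((b:ℝ)+1)*((b:ℝ)^2-1)*(b:ℝ)^(2*(k+i))))
      = (b:ℝ)^3 / (((b:ℝ)+1)*((b:ℝ)^2-1)*((b:ℝ)-1)*(b:ℝ)^k) := by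
  have hB := hB1 hb
  have hb0 : (b:ℝ) ≠ 0 := by linarith
  have hb1 : (b:ℝ)+1 ≠ 0 := by linarith
  have hb2 : (b:ℝ)^2 - 1 ≠ 0 := by nlinarith
  have hb3 : (b:ℝ)-1 ≠ 0 := by intro h; rw [sub_eq_zero] at h; linarith [h.symm ▸ hB]
  have hr0 : (0:ℝ) ≤ 1/(b:ℝ) := by positivity
  have hr1 : 1/(b:ℝ) < 1 := by rw [div_lt_one (by linarith)]; linarith
  have hr2 : 1 - 1/(b:ℝ) ≠ 0 := by
    rw [sub_ne_zero]; intro hh; rw [← hh] at hr1; exact lt_irrefl _ hr1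
  calc ∑' i : ℕ, (b:ℝ)^(k+i) * ((b:ℝ)^2 / (((b:ℝ)+1)*((b:ℝ)^2-1)*(b:ℝ)^(2*(k+i))))
      = ∑' i : ℕ, ((b:ℝ)^2 / (((b:ℝ)+1)*((b:ℝ)^2-1)*(b:ℝ)^k)) * ((1/(b:ℝ))^i) :=
        tsum_congr (G_eq hb k)
    _ = ((b:ℝ)^2 / (((b:ℝ)+1)*((b:ℝ)^2-1)*(b:ℝ)^k)) * (1 - 1/(b:ℝ))⁻¹ := by
        rw [tsum_mul_left, tsum_geometric_of_lt_one hr0 hr1]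
    _ = (b:ℝ)^3 / (((b:ℝ)+1)*((b:ℝ)^2-1)*((b:ℝ)-1)*(b:ℝ)^k) := by
        field_simp

/-- `Ξ_k < b³/(b³ + b² − b − 1) < 1` for all `k ≥ 0`. -/
theorem stmt8 (b : ℕ) (hb : 2 ≤ b) (k : ℕ) :
    Xi b k < (b : ℝ) ^ 3 / ((b : ℝ) ^ 3 + (b : ℝ) ^ 2 - (b : ℝ) - 1) ∧
    (b : ℝ) ^ 3 / ((b : ℝ) ^ 3 + (b : ℝ) ^ 2 - (b : ℝ) - 1) < 1 := by
  have hB := hB1 hb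
  have hden : (0:ℝ) < (b:ℝ)^3 + (b:ℝ)^2 - (b:ℝ) - 1 := by nlinarith
  constructor
  · have hK : (0:ℝ) < ((b:ℝ)-1) * (b:ℝ)^k := by
      apply mul_pos (by linarith) (by positivity)
    have step : (∑' i : ℕ, (b:ℝ)^(k+i) * zeta b (k+1+i))
        < ∑' i : ℕ, (b:ℝ)^(k+i) * ((b:ℝ)^2 / (((b:ℝ)+1)*((b:ℝ)^2-1)*(b:ℝ)^(2*(k+i)))) := by
      apply Summable.tsum_lt_tsum_of_nonneg (i := 0)
      · intro i
        exact mul_nonneg (by positivity) (zeta_nonneg hb _)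
      · intro i
        apply mul_le_mul_of_nonneg_left _ (by positivity : (0:ℝ) ≤ (b:ℝ)^(k+i))
        have h := (zeta_lt hb (k+i)).le
        rwa [show (k+i)+1 = k+1+i by omega] at h
      · apply mul_lt_mul_of_pos_left _ (by positivity : (0:ℝ) < (b:ℝ)^(k+0))
        have h := zeta_lt hb (k+0)
        rwa [show (k+0)+1 = k+1+0 by omega] at h
      · exact G_summable hb k
    have := mul_lt_mul_of_pos_left step hK
    unfold Xi
    calc ((b:ℝ)-1) * (b:ℝ)^k * ∑' i : ℕ, (b:ℝ)^(k+i) * zeta b (k+1+i)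
        < ((b:ℝ)-1) * (b:ℝ)^k *
          ∑' i : ℕ, (b:ℝ)^(k+i) * ((b:ℝ)^2 / (((b:ℝ)+1)*((b:ℝ)^2-1)*(b:ℝ)^(2*(k+i)))) := this
      _ = (b:ℝ)^3 / ((b:ℝ)^3 + (b:ℝ)^2 - (b:ℝ) - 1) := by
          rw [G_tsum hb k]
          have hb0 : (b:ℝ) ≠ 0 := by linarith
          have hb1 : (b:ℝ)+1 ≠ 0 := by linarith
          have hb2 : (b:ℝ)^2 - 1 ≠ 0 := by nlinarith
          have hb3 : (b:ℝ)-1 ≠ 0 := by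
            intro h; rw [sub_eq_zero] at h; linarith [h.symm ▸ hB]
          have hd : (b:ℝ)^3 + (b:ℝ)^2 - (b:ℝ) - 1 ≠ 0 := ne_of_gt hden
          rw [mul_div_assoc', div_eq_div_iff (mul_ne_zero (mul_ne_zero (mul_ne_zero hb1 hb2) hb3)
            (pow_ne_zero _ hb0)) hd]
          ring
  · rw [div_lt_one hden]
    have h2 : (2:ℝ) ≤ (b:ℝ) := by exact_mod_cast hb
    nlinarith [sq_nonneg ((b:ℝ)-1)]
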